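/- Let X be a metric space and let f, g : [0,1] → X be continuous curves. Let 0 = s_0 ≤ s_1 ≤ … ≤ s_p = 1 and 0 = t_0 ≤ t_1 ≤ … ≤ t_q = 1, set u_i = f(s_i) and v_j = g(t_j), and suppose the subdivisions have deviation at most η ≥ 0, i.e. for every i and every s ∈ [s_i, s_{i+1}], dist(f(s), f(s_i)) ≤ η and dist(f(s), f(s_{i+1})) ≤ η, and likewise for g on each [t_j, t_{j+1}]. Then δ_F(f, g) ≤ δ_dF(u, v) + 2η. -/

import Mathlib

open unitInterval

/-- A reparametrization: a continuous nondecreasing surjection of `[0,1]` onto itself. -/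
def IsReparam (α : I → I) : Prop :=
  Continuous α ∧ Monotone α ∧ Function.Surjective α

/-- The continuous Fréchet distance between two curves `f, g : [0,1] → X`:
the infimum over all pairs of reparametrizations `(α, β)` of
`sup_{r ∈ [0,1]} dist (f (α r)) (g (β r))`. -/
noncomputable def frechetDist {X : Type*} [MetricSpace X] (f g : I → X) : ℝ :=
  sInf { d | ∃ α β : I → I, IsReparam α ∧ IsReparam β ∧
    d = ⨆ r : I, dist (f (α r)) (g (β r)) }

/-- `IsCoupling p q m a b`: the index pairs `(a 0, b 0), …, (a m, b m)` form a coupling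
between sequences indexed by `0,…,p` and `0,…,q`. -/
def IsCoupling (p q m : ℕ) (a b : ℕ → ℕ) : Prop :=
  a 0 = 0 ∧ b 0 = 0 ∧ a m = p ∧ b m = q ∧
  (∀ l < m, a (l + 1) = a l ∨ a (l + 1) = a l + 1) ∧
  (∀ l < m, b (l + 1) = b l ∨ b (l + 1) = b l + 1)

/-- The discrete Fréchet distance between the finite sequences `u 0, …, u p` and
`v 0, …, v q`, computed with respect to the distance function `d`: the infimum over all
couplings of the maximum of `d` over the coupled pairs. -/
noncomputable def discreteFrechetWith {X : Type*} (d : X → X → ℝ)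
    (p q : ℕ) (u v : ℕ → X) : ℝ :=
  sInf { c | ∃ m : ℕ, ∃ a b : ℕ → ℕ, IsCoupling p q m a b ∧
    c = (Finset.range (m + 1)).sup' ⟨0, Finset.mem_range.mpr (Nat.succ_pos m)⟩
      (fun l => d (u (a l)) (v (b l))) }

/-- The discrete Fréchet distance with respect to the metric of `X`. -/
noncomputable def discreteFrechet {X : Type*} [MetricSpace X]
    (p q : ℕ) (u v : ℕ → X) : ℝ :=
  discreteFrechetWith dist p q u v

noncomputable def clamp01 (x : ℝ) : ℝ := min 1 (max 0 x)

lemma clamp01_mono : Monotone clamp01 := fun x y h => by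
  unfold clamp01; gcongr

lemma clamp01_cont : Continuous clamp01 := by
  unfold clamp01; fun_prop

lemma clamp01_of_one_le {x : ℝ} (h : 1 ≤ x) : clamp01 x = 1 := by
  unfold clamp01
  rw [max_eq_right (by linarith), min_eq_left h]

lemma clamp01_of_nonpos {x : ℝ} (h : x ≤ 0) : clamp01 x = 0 := by
  unfold clamp01
  rw [max_eq_left h, min_eq_right zero_le_one]

noncomputable def pwl (S : ℕ → ℝ) (m : ℕ) (x : ℝ) : ℝ :=
  S 0 + ∑ k ∈ Finset.range m, (S (k + 1) - S k) * clamp01 (x - k)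

lemma pwl_mono {S : ℕ → ℝ} {m : ℕ} (hS : ∀ k < m, S k ≤ S (k + 1)) :
    Monotone (pwl S m) := by
  intro x y hxy
  unfold pwl
  refine add_le_add le_rfl (Finset.sum_le_sum fun k hk => ?_)
  have h := hS k (Finset.mem_range.mp hk)
  exact mul_le_mul_of_nonneg_left (clamp01_mono (by linarith)) (by linarith)

lemma pwl_cont (S : ℕ → ℝ) (m : ℕ) : Continuous (pwl S m) := by
  unfold pwl
  exact continuous_const.add (continuous_finset_sum _ fun k _ =>
    continuous_const.mul (clamp01_cont.comp (continuous_id.sub continuous_const)))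

lemma pwl_nat (S : ℕ → ℝ) {m l : ℕ} (hl : l ≤ m) : pwl S m (l : ℝ) = S l := by
  unfold pwl
  rw [Finset.range_eq_Ico, ← Finset.sum_Ico_consecutive _ (Nat.zero_le l) hl]
  have h1 : ∀ k ∈ Finset.Ico 0 l, (S (k + 1) - S k) * clamp01 ((l : ℝ) - k) = S (k + 1) - S k := by
    intro k hk
    rw [clamp01_of_one_le (by
      have : k + 1 ≤ l := (Finset.mem_Ico.mp hk).2
      have : ((k : ℝ) + 1) ≤ l := by exact_mod_cast this
      linarith), mul_one]
  have h2 : ∀ k ∈ Finset.Ico l m, (S (k + 1) - S k) * clamp01 ((l : ℝ) - k) = 0 := by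
    intro k hk
    rw [clamp01_of_nonpos (by
      have : l ≤ k := (Finset.mem_Ico.mp hk).1
      have : (l : ℝ) ≤ k := by exact_mod_cast this
      linarith), mul_zero]
  rw [Finset.sum_congr rfl h1, Finset.sum_congr rfl h2, Finset.sum_const_zero,
    ← Finset.range_eq_Ico, Finset.sum_range_sub]
  ring

lemma coup_mono {a : ℕ → ℕ} {m : ℕ}
    (hstep : ∀ l < m, a (l + 1) = a l ∨ a (l + 1) = a l + 1) :
    ∀ j k, j ≤ k → k ≤ m → a j ≤ a k := by
  intro j k hjk hkm
  induction k with
  | zero =>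
    have : j = 0 := Nat.le_zero.mp hjk
    subst this; exact le_rfl
  | succ n ih =>
    rcases Nat.eq_or_lt_of_le hjk with h | h
    · subst h; exact le_rfl
    · have h1 : a j ≤ a n := ih (by omega) (by omega)
      rcases hstep n (by omega) with h2 | h2 <;> omega

lemma side_reparam {X : Type*} [MetricSpace X] (f : I → X) {p m : ℕ} (hm : 0 < m)
    (s : ℕ → I) (a : ℕ → ℕ)
    (hs0 : s 0 = 0) (hsp : s p = 1) (hsmono : ∀ i < p, s i ≤ s (i + 1))
    {η : ℝ} (hη : 0 ≤ η)
    (hdev : ∀ i < p, ∀ x : I, s i ≤ x → x ≤ s (i + 1) → dist (f x) (f (s i)) ≤ η)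
    (ha0 : a 0 = 0) (ham : a m = p)
    (hstep : ∀ l < m, a (l + 1) = a l ∨ a (l + 1) = a l + 1) :
    ∃ α : I → I, IsReparam α ∧
      ∀ l < m, ∀ r : I, (l : ℝ) ≤ m * r → (m : ℝ) * r ≤ l + 1 →
        dist (f (α r)) (f (s (a l))) ≤ η := by
  -- a k ≤ p for k ≤ m
  have haub : ∀ k ≤ m, a k ≤ p := fun k hk => ham ▸ coup_mono hstep k m hk le_rfl
  set S : ℕ → ℝ := fun k => (s (a k) : ℝ) with hS
  have hSmono : ∀ k < m, S k ≤ S (k + 1) := by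
    intro k hk
    rcases hstep k hk with h | h
    · simp [hS, h]
    · have hap : a k < p := by have := haub (k + 1) hk; omega
      have := hsmono (a k) hap
      simp only [hS, h]
      exact_mod_cast this
  set ψ : ℝ → ℝ := fun x => pwl S m ((m : ℝ) * x) with hψ
  have hψmono : Monotone ψ :=
    (pwl_mono hSmono).comp (fun x y h => mul_le_mul_of_nonneg_left h (Nat.cast_nonneg m))
  have hψcont : Continuous ψ := (pwl_cont S m).comp (continuous_const.mul continuous_id)
  have hψ0 : ψ 0 = 0 := by
    simp only [hψ, mul_zero]
    rw [show (0 : ℝ) = ((0 : ℕ) : ℝ) by norm_num, pwl_nat S (Nat.zero_le m)]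
    simp [hS, ha0, hs0]
  have hψ1 : ψ 1 = 1 := by
    simp only [hψ, mul_one]
    rw [pwl_nat S le_rfl]
    simp [hS, ham, hsp]
  have hmem : ∀ r : I, ψ r ∈ I := by
    intro r
    constructor
    · rw [← hψ0]; exact hψmono r.2.1
    · rw [← hψ1]; exact hψmono r.2.2
  refine ⟨fun r => ⟨ψ r, hmem r⟩, ⟨?_, ?_, ?_⟩, ?_⟩
  · exact (hψcont.comp continuous_subtype_val).subtype_mk _
  · intro x y hxy
    exact Subtype.mk_le_mk.mpr (hψmono (Subtype.coe_le_coe.mpr hxy))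
  · intro y
    have hy : (y : ℝ) ∈ Set.Icc (ψ 0) (ψ 1) := by
      rw [hψ0, hψ1]; exact y.2
    obtain ⟨x, hx, hxy⟩ := intermediate_value_Icc (by norm_num : (0:ℝ) ≤ 1) hψcont.continuousOn hy
    exact ⟨⟨x, hx⟩, Subtype.ext hxy⟩
  · intro l hl r hr1 hr2
    -- s (a l) ≤ ψ r ≤ s (a (l+1))
    have hlow : S l ≤ ψ r := by
      rw [← pwl_nat S hl.le]; exact pwl_mono hSmono hr1
    have hhigh : ψ r ≤ S (l + 1) := by
      rw [← pwl_nat S (by omega : l + 1 ≤ m)]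
      refine pwl_mono hSmono ?_
      push_cast
      linarith
    rcases hstep l hl with h | h
    · -- constant step: ψ r = s (a l)
      have hS1 : S (l + 1) = S l := by simp [hS, h]
      have hval : ψ r = S l := le_antisymm (hS1 ▸ hhigh) hlow
      have heq : (⟨ψ r, hmem r⟩ : I) = s (a l) := Subtype.ext hval
      show dist (f ⟨ψ r, hmem r⟩) (f (s (a l))) ≤ η
      rw [heq, dist_self]
      exact hη
    · have hap : a l < p := by have := haub (l + 1) hl; omega
      refine hdev (a l) hap ⟨ψ r, hmem r⟩ ?_ ?_
      · exact_mod_cast hlow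
      · rw [← h]; exact_mod_cast hhigh

/-- for subdivisions of deviation at most `η`, the continuous Fréchet distance
is at most the discrete Fréchet distance of the vertex sequences plus `2η`. -/
theorem frechetDist_le_discreteFrechet_add
    {X : Type*} [MetricSpace X] (f g : I → X) (hf : Continuous f) (hg : Continuous g)
    (p q : ℕ) (s t : ℕ → I)
    (hs0 : s 0 = 0) (hsp : s p = 1) (hsmono : ∀ i < p, s i ≤ s (i + 1))
    (ht0 : t 0 = 0) (htq : t q = 1) (htmono : ∀ j < q, t j ≤ t (j + 1))
    (η : ℝ) (hη : 0 ≤ η)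
    (hdevf : ∀ i < p, ∀ x : I, s i ≤ x → x ≤ s (i + 1) →
      dist (f x) (f (s i)) ≤ η ∧ dist (f x) (f (s (i + 1))) ≤ η)
    (hdevg : ∀ j < q, ∀ x : I, t j ≤ x → x ≤ t (j + 1) →
      dist (g x) (g (t j)) ≤ η ∧ dist (g x) (g (t (j + 1))) ≤ η) :
    frechetDist f g ≤ discreteFrechet p q (fun i => f (s i)) (fun j => g (t j)) + 2 * η := by
  have h01 : (0 : I) ≠ 1 := by
    intro h
    have := congrArg Subtype.val h
    norm_num at this
  have hp : 0 < p := by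
    rcases Nat.eq_zero_or_pos p with h | h
    · exact absurd (hs0.symm.trans (h ▸ hsp)) h01
    · exact h
  have hq : 0 < q := by
    rcases Nat.eq_zero_or_pos q with h | h
    · exact absurd (ht0.symm.trans (h ▸ htq)) h01
    · exact h
  suffices h : frechetDist f g - 2 * η ≤
      discreteFrechet p q (fun i => f (s i)) (fun j => g (t j)) by linarith
  rw [discreteFrechet, discreteFrechetWith]
  apply le_csInf
  · -- the staircase coupling shows the set is nonempty
    refine ⟨_, p + q, fun l => min l p, fun l => l - min l p,
      ⟨show min 0 p = 0 by omega, show 0 - min 0 p = 0 by omega,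
       show min (p + q) p = p by omega, show p + q - min (p + q) p = q by omega,
       fun l hl => show min (l + 1) p = min l p ∨ min (l + 1) p = min l p + 1 by omega,
       fun l hl => show l + 1 - min (l + 1) p = l - min l p ∨
         l + 1 - min (l + 1) p = (l - min l p) + 1 by omega⟩, rfl⟩
  · rintro c ⟨m, a, b, ⟨ha0, hb0, ham, hbm, haste, hbste⟩, rfl⟩
    have hm : 0 < m := by
      rcases Nat.eq_zero_or_pos m with h | h
      · subst h; omega
      · exact h
    obtain ⟨α, hα, hαb⟩ := side_reparam f hm s a hs0 hsp hsmono hη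
      (fun i hi x h1 h2 => (hdevf i hi x h1 h2).1) ha0 ham haste
    obtain ⟨β, hβ, hβb⟩ := side_reparam g hm t b ht0 htq htmono hη
      (fun j hj x h1 h2 => (hdevg j hj x h1 h2).1) hb0 hbm hbste
    have hd : frechetDist f g ≤ ⨆ r : I, dist (f (α r)) (g (β r)) := by
      apply csInf_le
      · refine ⟨0, ?_⟩
        rintro d ⟨α', β', _, _, rfl⟩
        exact Real.iSup_nonneg fun r => dist_nonneg
      · exact ⟨α, β, hα, hβ, rfl⟩
    have hsup : (⨆ r : I, dist (f (α r)) (g (β r))) ≤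
        (Finset.range (m + 1)).sup' Finset.nonempty_range_add_one
          (fun l => dist ((fun i => f (s i)) (a l)) ((fun j => g (t j)) (b l))) + 2 * η := by
      apply ciSup_le
      intro r
      obtain ⟨l, hlm, h1, h2⟩ : ∃ l, l < m ∧ (l : ℝ) ≤ m * r ∧ (m : ℝ) * r ≤ l + 1 := by
        have h0 : (0 : ℝ) ≤ (m : ℝ) * r := mul_nonneg (Nat.cast_nonneg m) r.2.1
        have hmr : (m : ℝ) * r ≤ m := by nlinarith [r.2.2, Nat.cast_nonneg (α := ℝ) m]
        set n := ⌊(m : ℝ) * r⌋₊ with hn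
        have hn1 : (n : ℝ) ≤ (m : ℝ) * r := Nat.floor_le h0
        have hn2 : (m : ℝ) * r < n + 1 := Nat.lt_floor_add_one _
        refine ⟨min n (m - 1), by omega, ?_, ?_⟩
        · calc ((min n (m - 1) : ℕ) : ℝ) ≤ n := by exact_mod_cast Nat.cast_le.mpr (min_le_left _ _)
            _ ≤ (m : ℝ) * r := hn1
        · rcases le_or_gt n (m - 1) with h | h
          · rw [min_eq_left h]; linarith
          · rw [min_eq_right h.le]
            have : ((m - 1 : ℕ) : ℝ) + 1 = m := by
              have : (1 : ℕ) ≤ m := hm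
              push_cast [Nat.cast_sub this]
              ring
            linarith
      have hf1 := hαb l hlm r h1 h2
      have hg1 := hβb l hlm r h1 h2
      have hle : dist (f (s (a l))) (g (t (b l))) ≤
          (Finset.range (m + 1)).sup' Finset.nonempty_range_add_one
            (fun l => dist ((fun i => f (s i)) (a l)) ((fun j => g (t j)) (b l))) :=
        Finset.le_sup' (fun l => dist ((fun i => f (s i)) (a l)) ((fun j => g (t j)) (b l)))
          (Finset.mem_range.mpr (show l < m + 1 by omega))
      have htri := dist_triangle4 (f (α r)) (f (s (a l))) (g (t (b l))) (g (β r))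
      have hcomm : dist (g (t (b l))) (g (β r)) = dist (g (β r)) (g (t (b l))) := dist_comm _ _
      linarith
    linarith
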